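/- Let κ be a unital linear form on T(A) (i.e. a linear form, from which the standard section sd(κ) on NC(A) is built), and let Ψ be the unique solution in linear forms on T̄(NC(A)) of Ψ = e + sd(κ) ≺ Ψ. Then for every n ≥ 1, every non-crossing partition L = {L₁,…,L_k} of [n], and all a₁,…,aₙ ∈ A: Ψ(L⊗(a₁⋯aₙ)) = ∏_{i=1}^{k} κ(a_{L_i}); consequently Ψ(Sp(a₁⋯aₙ)) = Σ_{L∈NC_n} κ^L(a₁⋯aₙ), where κ^L(a₁⋯aₙ) := ∏_{i} κ(a_{L_i}). -/

import Mathlib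

open scoped TensorProduct

/-- The data of a collection of blocks (finite sets of natural numbers). -/
abbrev PartData : Type := Finset (Finset ℕ)

/-- The non-crossing condition on a collection of blocks: there are no
`p₁ < q₁ < p₂ < q₂` with `p₁, p₂` in one block and `q₁, q₂` in a different block. -/
def NoCrossing (P : PartData) : Prop :=
  ∀ B ∈ P, ∀ B' ∈ P, B ≠ B' →
    ∀ p₁ ∈ B, ∀ p₂ ∈ B, ∀ q₁ ∈ B', ∀ q₂ ∈ B',
      ¬ (p₁ < q₁ ∧ q₁ < p₂ ∧ p₂ < q₂)

instance (P : PartData) : Decidable (NoCrossing P) := by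
  unfold NoCrossing; exact inferInstance

/-- `NestedIn B B'` is the relation `B <_L B'`: every element of `B` lies strictly
between `min B'` and `max B'`. -/
def NestedIn (B B' : Finset ℕ) : Prop :=
  ∀ m ∈ B, (∃ a ∈ B', a < m) ∧ (∃ b ∈ B', m < b)

instance (B B' : Finset ℕ) : Decidable (NestedIn B B') := by
  unfold NestedIn; exact inferInstance

/-- Admissibility of a decomposition of the blocks into `Q` and `U`:
no block of `Q` is `<_L` any block of `U`. -/
def Adm (Q U : PartData) : Prop := ∀ q ∈ Q, ∀ u ∈ U, ¬ NestedIn q u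

instance (Q U : PartData) : Decidable (Adm Q U) := by
  unfold Adm; exact inferInstance

/-- `P` is a non-crossing set partition of `{0, 1, …, n-1}`. -/
def IsNCP (n : ℕ) (P : PartData) : Prop :=
  ∅ ∉ P ∧ (∀ B ∈ P, ∀ B' ∈ P, B ≠ B' → Disjoint B B') ∧
    P.sup id = Finset.range n ∧ NoCrossing P

instance (n : ℕ) (P : PartData) : Decidable (IsNCP n P) := by
  unfold IsNCP; exact inferInstance

/-- The rank of `x` in `S` (the standardization map: the unique increasing
bijection from `S` onto `{0, …, |S|-1}`). -/
def rk (S : Finset ℕ) (x : ℕ) : ℕ := (S.filter (· < x)).card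

/-- Standardization of a collection of blocks, via the rank map of its ground set. -/
def stdParts (P : PartData) : PartData := P.image fun B => B.image (rk (P.sup id))

/-- The connected component of `x` in `T` relative to the separating set `S`. -/
def compOf (S T : Finset ℕ) (x : ℕ) : Finset ℕ :=
  T.filter fun y => ∀ s ∈ S, ¬ (min x y < s ∧ s < max x y)

/-- The ordered list of connected components of `T` relative to the separating set `S`. -/
def comps (S T : Finset ℕ) : List (Finset ℕ) :=
  ((T.sort (· ≤ ·)).map (compOf S T)).dedup

/-- The finite set of all non-crossing partitions of `{0, …, n-1}`. -/
def NCset (n : ℕ) : Finset PartData :=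
  ((Finset.range n).powerset.powerset).filter (IsNCP n)

section CombAux

open Finset

lemma rk_mono (S : Finset ℕ) : Monotone (rk S) := fun x y hxy =>
  Finset.card_le_card (fun z hz => by
    simp only [mem_filter] at *; exact ⟨hz.1, lt_of_lt_of_le hz.2 hxy⟩)

lemma rk_lt_rk {S : Finset ℕ} {x y : ℕ} (hx : x ∈ S) (hxy : x < y) : rk S x < rk S y := by
  apply Finset.card_lt_card
  constructor
  · exact fun z hz => by simp only [mem_filter] at *; exact ⟨hz.1, lt_trans hz.2 hxy⟩
  · intro h
    have := h (by simp [mem_filter, hx, hxy] : x ∈ S.filter (· < y))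
    simp [mem_filter] at this

lemma rk_reflect {S : Finset ℕ} {x y : ℕ} (h : rk S x < rk S y) : x < y := by
  by_contra hc
  exact absurd (rk_mono S (not_lt.1 hc)) (not_le.2 h)

lemma rk_injOn {S : Finset ℕ} {x y : ℕ} (hx : x ∈ S) (hy : y ∈ S)
    (h : rk S x = rk S y) : x = y := by
  rcases lt_trichotomy x y with hl | he | hl
  · exact absurd h (Nat.ne_of_lt (rk_lt_rk hx hl))
  · exact he
  · exact absurd h.symm (Nat.ne_of_lt (rk_lt_rk hy hl))

lemma rk_lt_card {S : Finset ℕ} {x : ℕ} (hx : x ∈ S) : rk S x < S.card := by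
  apply Finset.card_lt_card
  constructor
  · exact filter_subset _ _
  · intro h
    have := h hx
    simp [mem_filter] at this

lemma image_rk (S : Finset ℕ) : S.image (rk S) = Finset.range S.card := by
  apply Finset.eq_of_subset_of_card_le
  · intro z hz
    simp only [mem_image] at hz
    obtain ⟨x, hx, rfl⟩ := hz
    exact mem_range.2 (rk_lt_card hx)
  · rw [card_range, Finset.card_image_of_injOn (fun x hx y hy => rk_injOn hx hy)]

lemma rk_eq_countP (S : Finset ℕ) (x : ℕ) :
    rk S x = (S.sort (· ≤ ·)).countP (fun y => decide (y < x)) := by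
  rw [rk, Finset.card_def, Finset.filter_val, ← Multiset.countP_eq_card_filter,
    ← Finset.sort_eq S (· ≤ ·), Multiset.coe_countP]

lemma List.getD_countP_of_sorted (l : List ℕ) (hl : l.Pairwise (· < ·)) {x : ℕ} (hx : x ∈ l) :
    l.getD (l.countP (fun y => decide (y < x))) 0 = x := by
  induction l with
  | nil => cases hx
  | cons a t ih =>
    rcases List.pairwise_cons.1 hl with ⟨ha, ht⟩
    rcases List.mem_cons.1 hx with h | hx
    · subst h
      have h0 : (x :: t).countP (fun y => decide (y < x)) = 0 := by
        rw [List.countP_eq_zero]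
        intro y hy
        rcases List.mem_cons.1 hy with h | hy
        · simp [h]
        · simp [Nat.not_lt.2 (le_of_lt (ha y hy))]
      rw [h0]; rfl
    · have hax : a < x := ha x hx
      rw [List.countP_cons_of_pos (by simp [hax])]
      simpa using ih ht hx

lemma getD_sort_rk {S : Finset ℕ} {x : ℕ} (hx : x ∈ S) :
    (S.sort (· ≤ ·)).getD (rk S x) 0 = x := by
  rw [rk_eq_countP]
  exact List.getD_countP_of_sorted _ ((Finset.sortedLT_sort S).pairwise) ((Finset.mem_sort _).2 hx)

lemma sort_image_of_strictMono {S : Finset ℕ} {f : ℕ → ℕ}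
    (hf : ∀ x ∈ S, ∀ y ∈ S, x < y → f x < f y) :
    (S.image f).sort (· ≤ ·) = (S.sort (· ≤ ·)).map f := by
  haveI : IsAntisymm ℕ (· < ·) := ⟨fun a b h h' => (Nat.lt_asymm h h').elim⟩
  have hinj : Set.InjOn f S := by
    intro x hx y hy hxy
    by_contra hne
    rcases lt_or_gt_of_ne hne with h | h
    · exact absurd hxy (Nat.ne_of_lt (hf x hx y hy h))
    · exact absurd hxy.symm (Nat.ne_of_lt (hf y hy x hx h))
  refine (fun h1 h2 h3 => List.Perm.eq_of_pairwise' (r := (· < ·)) h2 h3 h1) ?_ ?_ ?_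
  · rw [← Multiset.coe_eq_coe]
    rw [Finset.sort_eq, ← Multiset.map_coe, Finset.sort_eq]
    exact Finset.image_val_of_injOn hinj
  · exact (Finset.sortedLT_sort _).pairwise
  · rw [List.pairwise_map]
    apply List.Pairwise.imp_of_mem (l := S.sort (· ≤ ·))
      (R := (· < ·))
    · intro a b hab hbb h
      exact hf a ((Finset.mem_sort _).1 hab) b ((Finset.mem_sort _).1 hbb) h
    · exact (Finset.sortedLT_sort S).pairwise

/-- A good family of blocks. -/
structure GoodFam (Q : PartData) : Prop where
  ne : ∅ ∉ Q
  disj : ∀ B ∈ Q, ∀ B' ∈ Q, B ≠ B' → Disjoint B B'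
  nc : NoCrossing Q

lemma GoodFam.of_isNCP {n : ℕ} {P : PartData} (h : IsNCP n P) : GoodFam P :=
  ⟨h.1, h.2.1, h.2.2.2⟩

lemma GoodFam.subset {P Q : PartData} (h : GoodFam P) (hQ : Q ⊆ P) : GoodFam Q :=
  ⟨fun he => h.ne (hQ he),
   fun B hB B' hB' => h.disj B (hQ hB) B' (hQ hB'),
   fun B hB B' hB' => h.nc B (hQ hB) B' (hQ hB')⟩

lemma block_subset_sup {Q : PartData} {B : Finset ℕ} (hB : B ∈ Q) : B ⊆ Q.sup id :=
  Finset.le_sup (f := id) hB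

/-- Images of distinct blocks under the rank of the ground set are distinct. -/
lemma image_rk_injOn {Q : PartData} (h : GoodFam Q) {B B' : Finset ℕ}
    (hB : B ∈ Q) (hB' : B' ∈ Q)
    (he : B.image (rk (Q.sup id)) = B'.image (rk (Q.sup id))) : B = B' := by
  by_contra hne
  have hdisj := h.disj B hB B' hB' hne
  have hBne : B.Nonempty := Finset.nonempty_iff_ne_empty.2 (fun hc => h.ne (hc ▸ hB))
  obtain ⟨x, hx⟩ := hBne
  have : rk (Q.sup id) x ∈ B'.image (rk (Q.sup id)) := he ▸ Finset.mem_image_of_mem _ hx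
  obtain ⟨y, hy, hxy⟩ := Finset.mem_image.1 this
  have hxG : x ∈ Q.sup id := block_subset_sup hB hx
  have hyG : y ∈ Q.sup id := block_subset_sup hB' hy
  have : y = x := rk_injOn hyG hxG hxy
  subst this
  exact Finset.disjoint_left.1 hdisj hx hy

lemma stdParts_isNCP {Q : PartData} (h : GoodFam Q) :
    IsNCP (Q.sup id).card (stdParts Q) := by
  set G := Q.sup id with hG
  have hsub : ∀ {B : Finset ℕ}, B ∈ Q → B ⊆ G := fun hB => block_subset_sup hB
  refine ⟨?_, ?_, ?_, ?_⟩
  · intro hc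
    obtain ⟨B, hB, hBe⟩ := Finset.mem_image.1 hc
    have hBne : B.Nonempty := Finset.nonempty_iff_ne_empty.2 (fun hc => h.ne (hc ▸ hB))
    exact absurd hBe (Finset.nonempty_iff_ne_empty.1 (hBne.image _))
  · intro C hC C' hC' hne
    obtain ⟨B, hB, rfl⟩ := Finset.mem_image.1 hC
    obtain ⟨B', hB', rfl⟩ := Finset.mem_image.1 hC'
    have hBne : B ≠ B' := fun hc => hne (by rw [hc])
    rw [Finset.disjoint_left]
    intro z hz hz'
    obtain ⟨x, hx, rfl⟩ := Finset.mem_image.1 hz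
    obtain ⟨y, hy, hxy⟩ := Finset.mem_image.1 hz'
    have : y = x := rk_injOn (hsub hB' hy) (hsub hB hx) hxy
    subst this
    exact Finset.disjoint_left.1 (h.disj B hB B' hB' hBne) hx hy
  · -- sup of images = range card
    apply le_antisymm
    · apply Finset.sup_le
      intro C hC
      obtain ⟨B, hB, rfl⟩ := Finset.mem_image.1 hC
      intro z hz
      obtain ⟨x, hx, rfl⟩ := Finset.mem_image.1 hz
      rw [← image_rk G]
      exact Finset.mem_image_of_mem _ (hsub hB hx)
    · intro z hz
      rw [← image_rk G] at hz
      obtain ⟨x, hx, rfl⟩ := Finset.mem_image.1 hz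
      rw [Finset.mem_sup] at hx
      obtain ⟨B, hB, hxB⟩ := hx
      rw [Finset.mem_sup]
      exact ⟨B.image (rk G), Finset.mem_image_of_mem _ hB,
        Finset.mem_image_of_mem _ hxB⟩
  · intro C hC C' hC' hne p₁ hp₁ p₂ hp₂ q₁ hq₁ q₂ hq₂ hcr
    obtain ⟨B, hB, rfl⟩ := Finset.mem_image.1 hC
    obtain ⟨B', hB', rfl⟩ := Finset.mem_image.1 hC'
    have hBne : B ≠ B' := fun hc => hne (by rw [hc])
    obtain ⟨x₁, hx₁, rfl⟩ := Finset.mem_image.1 hp₁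
    obtain ⟨x₂, hx₂, rfl⟩ := Finset.mem_image.1 hp₂
    obtain ⟨y₁, hy₁, rfl⟩ := Finset.mem_image.1 hq₁
    obtain ⟨y₂, hy₂, rfl⟩ := Finset.mem_image.1 hq₂
    exact h.nc B hB B' hB' hBne x₁ hx₁ x₂ hx₂ y₁ hy₁ y₂ hy₂
      ⟨rk_reflect hcr.1, rk_reflect hcr.2.1, rk_reflect hcr.2.2⟩

lemma card_stdParts {Q : PartData} (h : GoodFam Q) : (stdParts Q).card = Q.card :=
  Finset.card_image_of_injOn (fun B hB B' hB' => image_rk_injOn h hB hB')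

lemma stdParts_singleton (B : Finset ℕ) :
    stdParts {B} = {Finset.range B.card} := by
  rw [stdParts, Finset.image_singleton, Finset.sup_singleton]
  show ({(B.image (rk B))} : PartData) = _
  rw [image_rk B]

section Components

variable {S T : Finset ℕ}

lemma mem_compOf_self {x : ℕ} (hx : x ∈ T) : x ∈ compOf S T x := by
  rw [compOf, Finset.mem_filter]
  exact ⟨hx, fun s _ h => by omega⟩

lemma compOf_subset (x : ℕ) : compOf S T x ⊆ T := Finset.filter_subset _ _

lemma mem_compOf_symm {x y : ℕ} (hx : x ∈ T) (hy : y ∈ compOf S T x) :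
    x ∈ compOf S T y := by
  rw [compOf, Finset.mem_filter] at *
  exact ⟨hx, fun s hs h => hy.2 s hs (by omega)⟩

lemma mem_compOf_trans (hST : ∀ z ∈ T, z ∉ S) {x y z : ℕ}
    (hy : y ∈ compOf S T x) (hz : z ∈ compOf S T y) : z ∈ compOf S T x := by
  rw [compOf, Finset.mem_filter] at *
  refine ⟨hz.1, fun s hs h => ?_⟩
  have hys : y ≠ s := fun hc => hST y hy.1 (hc ▸ hs)
  have h1 := hy.2 s hs
  have h2 := hz.2 s hs
  omega

lemma compOf_eq_of_mem (hST : ∀ z ∈ T, z ∉ S) {x y : ℕ} (hx : x ∈ T)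
    (hy : y ∈ compOf S T x) : compOf S T y = compOf S T x := by
  ext z
  constructor
  · intro hz; exact mem_compOf_trans hST hy hz
  · intro hz; exact mem_compOf_trans hST (mem_compOf_symm hx hy) hz

lemma mem_comps_iff {J : Finset ℕ} :
    J ∈ comps S T ↔ ∃ x ∈ T, J = compOf S T x := by
  rw [comps, List.mem_dedup, List.mem_map]
  constructor
  · rintro ⟨x, hx, rfl⟩; exact ⟨x, (Finset.mem_sort _).1 hx, rfl⟩
  · rintro ⟨x, hx, rfl⟩; exact ⟨x, (Finset.mem_sort _).2 hx, rfl⟩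

lemma comps_nonempty {J : Finset ℕ} (hJ : J ∈ comps S T) : J.Nonempty := by
  obtain ⟨x, hx, rfl⟩ := mem_comps_iff.1 hJ
  exact ⟨x, mem_compOf_self hx⟩

lemma comps_nodup : (comps S T).Nodup := List.nodup_dedup _

lemma comps_disjoint (hST : ∀ z ∈ T, z ∉ S) {J J' : Finset ℕ}
    (hJ : J ∈ comps S T) (hJ' : J' ∈ comps S T) (hne : J ≠ J') : Disjoint J J' := by
  obtain ⟨x, hx, rfl⟩ := mem_comps_iff.1 hJ
  obtain ⟨y, hy, rfl⟩ := mem_comps_iff.1 hJ'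
  rw [Finset.disjoint_left]
  intro w hw hw'
  exact hne ((compOf_eq_of_mem hST hx hw).symm.trans (compOf_eq_of_mem hST hy hw'))

lemma mem_comps_of_mem (hST : ∀ z ∈ T, z ∉ S) {w : ℕ} (hw : w ∈ T) :
    compOf S T w ∈ comps S T := mem_comps_iff.2 ⟨w, hw, rfl⟩

/-- `T` is the disjoint union of its components. -/
lemma comps_biUnion (hST : ∀ z ∈ T, z ∉ S) :
    (comps S T).toFinset.biUnion id = T := by
  apply le_antisymm
  · intro z hz
    rw [Finset.mem_biUnion] at hz
    obtain ⟨J, hJ, hzJ⟩ := hz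
    rw [List.mem_toFinset, mem_comps_iff] at hJ
    obtain ⟨x, hx, rfl⟩ := hJ
    exact compOf_subset x hzJ
  · intro z hz
    rw [Finset.mem_biUnion]
    exact ⟨compOf S T z, List.mem_toFinset.2 (mem_comps_of_mem hST hz),
      mem_compOf_self hz⟩

lemma comps_card_sum (hST : ∀ z ∈ T, z ∉ S) :
    ((comps S T).map Finset.card).sum = T.card := by
  have hd : ∀ J ∈ (comps S T).toFinset, ∀ J' ∈ (comps S T).toFinset, J ≠ J' →
      Disjoint (id J) (id J') := fun J hJ J' hJ' hne =>
    comps_disjoint hST (List.mem_toFinset.1 hJ) (List.mem_toFinset.1 hJ') hne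
  calc ((comps S T).map Finset.card).sum
      = ∑ J ∈ (comps S T).toFinset, J.card := (List.sum_toFinset _ comps_nodup).symm
    _ = ((comps S T).toFinset.biUnion id).card := (Finset.card_biUnion hd).symm
    _ = T.card := by rw [comps_biUnion hST]

end Components

section NCPcomp

variable {n : ℕ} {P : PartData} {B₀ : Finset ℕ}

lemma hST_aux : ∀ z ∈ Finset.range n \ B₀, z ∉ B₀ :=
  fun z hz => (Finset.mem_sdiff.1 hz).2

lemma block_mem_T (hP : IsNCP n P) (hB₀ : B₀ ∈ P) {B : Finset ℕ} (hB : B ∈ P)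
    (hne : B ≠ B₀) {x : ℕ} (hx : x ∈ B) : x ∈ Finset.range n \ B₀ := by
  rw [Finset.mem_sdiff]
  constructor
  · rw [← hP.2.2.1]; exact block_subset_sup hB hx
  · exact fun hc => Finset.disjoint_left.1 (hP.2.1 B hB B₀ hB₀ hne) hx hc

lemma no_sep_within_block (hP : IsNCP n P) (hB₀ : B₀ ∈ P) (h0 : 0 ∈ B₀)
    {B : Finset ℕ} (hB : B ∈ P) (hne : B ≠ B₀) {x y : ℕ} (hx : x ∈ B) (hy : y ∈ B) :
    ∀ s ∈ B₀, ¬ (min x y < s ∧ s < max x y) := by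
  intro s hs hcontra
  have hx0 : x ≠ 0 := fun hc =>
    Finset.disjoint_left.1 (hP.2.1 B hB B₀ hB₀ hne) hx (hc ▸ h0)
  have hy0 : y ≠ 0 := fun hc =>
    Finset.disjoint_left.1 (hP.2.1 B hB B₀ hB₀ hne) hy (hc ▸ h0)
  have hB₀B : B₀ ≠ B := fun hc => hne hc.symm
  rcases le_total x y with hle | hle
  · have := hP.2.2.2 B₀ hB₀ B hB hB₀B 0 h0 s hs x hx y hy
    omega
  · have := hP.2.2.2 B₀ hB₀ B hB hB₀B 0 h0 s hs y hy x hx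
    omega

/-- A block other than `B₀` meeting a component is contained in it. -/
lemma block_subset_comp (hP : IsNCP n P) (hB₀ : B₀ ∈ P) (h0 : 0 ∈ B₀)
    {B : Finset ℕ} (hB : B ∈ P) (hne : B ≠ B₀) {J : Finset ℕ}
    (hJ : J ∈ comps B₀ (Finset.range n \ B₀)) {x : ℕ} (hx : x ∈ B) (hxJ : x ∈ J) :
    B ⊆ J := by
  set T := Finset.range n \ B₀ with hT
  obtain ⟨z, hz, rfl⟩ := mem_comps_iff.1 hJ
  intro y hy
  have hyT : y ∈ T := block_mem_T hP hB₀ hB hne hy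
  have hyx : y ∈ compOf B₀ T x := by
    rw [compOf, Finset.mem_filter]
    exact ⟨hyT, fun s hs h => no_sep_within_block hP hB₀ h0 hB hne hx hy s hs h⟩
  have := compOf_eq_of_mem (S := B₀) hST_aux hz hxJ
  rw [← this]
  exact hyx

lemma comp_ground (hP : IsNCP n P) (hB₀ : B₀ ∈ P) (h0 : 0 ∈ B₀)
    {J : Finset ℕ} (hJ : J ∈ comps B₀ (Finset.range n \ B₀)) :
    ((P.erase B₀).filter (· ⊆ J)).sup id = J := by
  apply le_antisymm
  · apply Finset.sup_le
    intro B hB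
    exact (Finset.mem_filter.1 hB).2
  · intro x hxJ
    have hxT : x ∈ Finset.range n \ B₀ := compOf_subset _ ((mem_comps_iff.1 hJ).choose_spec.2 ▸ hxJ)
    have hxB : ∃ B ∈ P, x ∈ B := by
      have : x ∈ P.sup id := by
        rw [hP.2.2.1]; exact (Finset.mem_sdiff.1 hxT).1
      rwa [Finset.mem_sup] at this
    obtain ⟨B, hB, hxB⟩ := hxB
    have hne : B ≠ B₀ := fun hc => (Finset.mem_sdiff.1 hxT).2 (hc ▸ hxB)
    have hBJ : B ⊆ J := block_subset_comp hP hB₀ h0 hB hne hJ hxB hxJ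
    rw [Finset.mem_sup]
    exact ⟨B, Finset.mem_filter.2 ⟨Finset.mem_erase.2 ⟨hne, hB⟩, hBJ⟩, hxB⟩

/-- The blocks other than `B₀` are partitioned by the components. -/
lemma erase_eq_biUnion (hP : IsNCP n P) (hB₀ : B₀ ∈ P) (h0 : 0 ∈ B₀) :
    P.erase B₀ = (comps B₀ (Finset.range n \ B₀)).toFinset.biUnion
      (fun J => (P.erase B₀).filter (· ⊆ J)) := by
  apply le_antisymm
  · intro B hB
    have hBP : B ∈ P := Finset.mem_of_mem_erase hB
    have hne : B ≠ B₀ := Finset.ne_of_mem_erase hB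
    have hBne : B.Nonempty := Finset.nonempty_iff_ne_empty.2 (fun hc => hP.1 (hc ▸ hBP))
    obtain ⟨x, hx⟩ := hBne
    have hxT : x ∈ Finset.range n \ B₀ := block_mem_T hP hB₀ hBP hne hx
    rw [Finset.mem_biUnion]
    refine ⟨compOf B₀ _ x, List.mem_toFinset.2 (mem_comps_of_mem hST_aux hxT), ?_⟩
    rw [Finset.mem_filter]
    exact ⟨hB, block_subset_comp hP hB₀ h0 hBP hne
      (mem_comps_of_mem hST_aux hxT) hx (mem_compOf_self hxT)⟩
  · intro B hB
    rw [Finset.mem_biUnion] at hB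
    obtain ⟨J, _, hBJ⟩ := hB
    exact (Finset.mem_filter.1 hBJ).1

/-- The product over blocks, grouped by components. -/
lemma prod_comps_blocks {M : Type*} [CommMonoid M] (hP : IsNCP n P) (hB₀ : B₀ ∈ P)
    (h0 : 0 ∈ B₀) (g : Finset ℕ → M) :
    ((comps B₀ (Finset.range n \ B₀)).map
        (fun J => ∏ B ∈ (P.erase B₀).filter (· ⊆ J), g B)).prod
      = ∏ B ∈ P.erase B₀, g B := by
  have hd : ∀ J ∈ (comps B₀ (Finset.range n \ B₀)).toFinset,
      ∀ J' ∈ (comps B₀ (Finset.range n \ B₀)).toFinset, J ≠ J' →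
      Disjoint ((P.erase B₀).filter (· ⊆ J)) ((P.erase B₀).filter (· ⊆ J')) := by
    intro J hJ J' hJ' hne
    have hdd : Disjoint J J' := comps_disjoint hST_aux
      (List.mem_toFinset.1 hJ) (List.mem_toFinset.1 hJ') hne
    rw [Finset.disjoint_left]
    intro B hB hB'
    have h1 : B ⊆ J := (Finset.mem_filter.1 hB).2
    have h2 : B ⊆ J' := (Finset.mem_filter.1 hB').2
    have hBP : B ∈ P := Finset.mem_of_mem_erase (Finset.mem_filter.1 hB).1
    have hBne : B.Nonempty := Finset.nonempty_iff_ne_empty.2 (fun hc => hP.1 (hc ▸ hBP))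
    obtain ⟨x, hx⟩ := hBne
    exact Finset.disjoint_left.1 hdd (h1 hx) (h2 hx)
  calc ((comps B₀ (Finset.range n \ B₀)).map
        (fun J => ∏ B ∈ (P.erase B₀).filter (· ⊆ J), g B)).prod
      = ∏ J ∈ (comps B₀ (Finset.range n \ B₀)).toFinset,
          ∏ B ∈ (P.erase B₀).filter (· ⊆ J), g B :=
        (List.prod_toFinset _ comps_nodup).symm
    _ = ∏ B ∈ (comps B₀ (Finset.range n \ B₀)).toFinset.biUnion
          (fun J => (P.erase B₀).filter (· ⊆ J)), g B := (Finset.prod_biUnion hd).symm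
    _ = ∏ B ∈ P.erase B₀, g B := by rw [← erase_eq_biUnion hP hB₀ h0]

end NCPcomp

lemma isNCP_single (k : ℕ) : IsNCP (k + 1) {Finset.range (k + 1)} := by
  refine ⟨?_, ?_, ?_, ?_⟩
  · intro hc
    rw [Finset.mem_singleton] at hc
    exact absurd hc.symm (Finset.nonempty_iff_ne_empty.1 (Finset.nonempty_range_iff.2 (Nat.succ_ne_zero k)))
  · intro B hB B' hB' hne
    rw [Finset.mem_singleton] at hB hB'
    exact absurd (hB.trans hB'.symm) hne
  · rw [Finset.sup_singleton]; rfl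
  · intro B hB B' hB' hne
    rw [Finset.mem_singleton] at hB hB'
    exact absurd (hB.trans hB'.symm) hne

lemma rk_range {n x : ℕ} (hx : x < n) : rk (Finset.range n) x = x := by
  rw [rk]
  have : (Finset.range n).filter (· < x) = Finset.range x := by
    ext z
    simp only [Finset.mem_filter, Finset.mem_range]
    omega
  rw [this, Finset.card_range]

lemma stdParts_of_range {n : ℕ} {P : PartData} (hsup : P.sup id = Finset.range n) :
    stdParts P = P := by
  rw [stdParts, hsup]
  have : ∀ B ∈ P, B.image (rk (Finset.range n)) = B := by
    intro B hB
    have hBr : B ⊆ Finset.range n := hsup ▸ block_subset_sup hB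
    have h := Finset.image_congr (s := B) (f := rk (Finset.range n)) (g := id)
      (fun x hx => rk_range (Finset.mem_range.1 (hBr hx)))
    rw [h, Finset.image_id]
  calc P.image (fun B => B.image (rk (Finset.range n))) = P.image id := Finset.image_congr this
  _ = P := Finset.image_id

lemma dedup_map_const {α β : Type*} [DecidableEq β] (c : β) :
    ∀ l : List α, l ≠ [] → (l.map (fun _ => c)).dedup = [c] := by
  intro l
  induction l with
  | nil => intro h; exact absurd rfl h
  | cons a t ih =>
    intro _
    rcases eq_or_ne t [] with rfl | ht
    · simp
    · rw [List.map_cons, List.dedup_cons_of_mem (by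
        rw [List.mem_map]
        obtain ⟨b, hb⟩ := List.exists_mem_of_ne_nil t ht
        exact ⟨b, hb, rfl⟩)]
      exact ih ht

lemma comps_empty_sep {T : Finset ℕ} (hT : T.Nonempty) : comps ∅ T = [T] := by
  have h1 : compOf ∅ T = fun _ => T := by
    funext x
    rw [compOf, Finset.filter_true_of_mem (fun y _ => by simp)]
  rw [comps, h1]
  exact dedup_map_const T _ (by
    intro hc
    obtain ⟨x, hx⟩ := hT
    have := (Finset.mem_sort (α := ℕ) (· ≤ ·)).2 hx
    rw [hc] at this
    cases this)

lemma getD_sort_range {n j : ℕ} (hj : j < n) :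
    ((Finset.range n).sort (· ≤ ·)).getD j 0 = j := by
  rw [Finset.sort_range]
  rw [List.getD_eq_getElem _ _ (by simpa using hj)]
  simp

lemma getD_sort_mem {B : Finset ℕ} {j : ℕ} (hj : j < B.card) :
    (B.sort (· ≤ ·)).getD j 0 ∈ B := by
  have hlen : j < (B.sort (· ≤ ·)).length := by rw [Finset.length_sort]; exact hj
  rw [List.getD_eq_getElem _ _ hlen]
  exact (Finset.mem_sort _).1 (List.getElem_mem _)

lemma sort_image_getD {B J : Finset ℕ} (hBJ : B ⊆ J) {j : ℕ} (hj : j < B.card) :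
    ((B.image (rk J)).sort (· ≤ ·)).getD j 0 = rk J ((B.sort (· ≤ ·)).getD j 0) := by
  rw [sort_image_of_strictMono (f := rk J) (fun x hx y _ hxy => rk_lt_rk (hBJ hx) hxy)]
  have hlen : j < (B.sort (· ≤ ·)).length := by rw [Finset.length_sort]; exact hj
  rw [List.getD_eq_getElem _ _ (by simpa using hlen), List.getD_eq_getElem _ _ hlen,
    List.getElem_map]

lemma adm_zero_block {B₀ : Finset ℕ} (h0 : 0 ∈ B₀) (U : PartData) : Adm {B₀} U := by
  intro q hq u _ hnest
  rw [Finset.mem_singleton] at hq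
  subst hq
  obtain ⟨⟨a, _, ha⟩, -⟩ := hnest 0 h0
  omega

lemma zero_block_unique {n : ℕ} {P : PartData} (hP : IsNCP n P) {B₀ q : Finset ℕ}
    (hB₀ : B₀ ∈ P) (h0 : 0 ∈ B₀) (hq : q ∈ P) (hq0 : 0 ∈ q) : q = B₀ := by
  by_contra hne
  exact Finset.disjoint_left.1 (hP.2.1 q hq B₀ hB₀ hne) hq0 h0

end CombAux

noncomputable section

/-- `NC(A) = ⊕_{n ≥ 1} (span of partition data) ⊗ A^{⊗n}`: the space of `A`-decorated
(non-crossing) partitions; the genuine non-crossing ones are singled out by `IsNCP`. -/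
abbrev NCA (K : Type*) [Field K] (A : Type*) [Ring A] [Algebra K A] : Type _ :=
  DirectSum (PartData × ℕ) fun p => PiTensorProduct K fun _ : Fin (p.2 + 1) => A

/-- `T̄(NC(A))`: the tensor algebra over the space of decorated non-crossing partitions. -/
abbrev TNA (K : Type*) [Field K] (A : Type*) [Ring A] [Algebra K A] : Type _ :=
  TensorAlgebra K (NCA K A)

variable (K : Type*) [Field K] (A : Type*) [Ring A] [Algebra K A]

/-- The decorated partition `P ⊗ (a₀ ⋯ a_k)` as an element of the module `NC(A)`. -/
def dvec (P : PartData) (k : ℕ) (a : ℕ → A) : NCA K A :=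
  DirectSum.of (fun p : PartData × ℕ => PiTensorProduct K fun _ : Fin (p.2 + 1) => A)
    (P, k) (PiTensorProduct.tprod K fun i : Fin (k + 1) => a (i : ℕ))

/-- The decorated partition `P ⊗ (a₀ ⋯ a_{m-1})` (decoration of length `m`) as a single
bar-letter of `T̄(NC(A))`; length `0` gives the unit. -/
def dgen (P : PartData) (m : ℕ) (a : ℕ → A) : TNA K A :=
  match m with
  | 0 => 1
  | k + 1 => TensorAlgebra.ι K (dvec K A P k a)

/-- The decorated standardized piece `P' ⊗ a_S`: the partition `P'` decorated by the
letters of `a` indexed by `S`, in increasing order. -/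
def dsub (a : ℕ → A) (P' : PartData) (S : Finset ℕ) : TNA K A :=
  dgen K A P' S.card fun j => a ((S.sort (· ≤ ·)).getD j 0)

/-- The value of the coproduct on a decorated non-crossing partition `L ⊗ (a₀ ⋯ a_{n-1})`:
`Σ_{L = Q ⊔_adm U} (st(Q) ⊗ a_Q) ⊗ (st(J₁^{L,Q}) ⊗ a_{J₁^{L,Q}} | ⋯ )`. -/
def dcopF (P : PartData) (a : ℕ → A) : TNA K A ⊗[K] TNA K A :=
  ∑ Q ∈ P.powerset.filter (fun Q => Adm Q (P \ Q)),
    dsub K A a (stdParts Q) (Q.sup id) ⊗ₜ[K]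
      ((comps (Q.sup id) (P.sup id \ Q.sup id)).map fun J =>
        dsub K A a (stdParts ((P \ Q).filter (· ⊆ J))) J).prod

/-- The value of the left half-coproduct `Δ_≺⁺`: the part of the sum where the block
containing the first element (here `0`) lies in `Q`. -/
def dcopP (P : PartData) (a : ℕ → A) : TNA K A ⊗[K] TNA K A :=
  ∑ Q ∈ P.powerset.filter (fun Q => Adm Q (P \ Q) ∧ ∃ q ∈ Q, 0 ∈ q),
    dsub K A a (stdParts Q) (Q.sup id) ⊗ₜ[K]
      ((comps (Q.sup id) (P.sup id \ Q.sup id)).map fun J =>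
        dsub K A a (stdParts ((P \ Q).filter (· ⊆ J))) J).prod

/-- The value of the right half-coproduct `Δ_≻⁺`: the part of the sum where the block
containing the first element (here `0`) lies in `U`. -/
def dcopS (P : PartData) (a : ℕ → A) : TNA K A ⊗[K] TNA K A :=
  ∑ Q ∈ P.powerset.filter (fun Q => Adm Q (P \ Q) ∧ ∃ u ∈ P \ Q, 0 ∈ u),
    dsub K A a (stdParts Q) (Q.sup id) ⊗ₜ[K]
      ((comps (Q.sup id) (P.sup id \ Q.sup id)).map fun J =>
        dsub K A a (stdParts ((P \ Q).filter (· ⊆ J))) J).prod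

/-- The set of bar-words of genuine decorated non-crossing partitions in `T̄(NC(A))`. -/
def DWord : Set (TNA K A) :=
  {x | ∃ l : List (PartData × ℕ × (ℕ → A)),
        (∀ t ∈ l, 1 ≤ t.2.1 ∧ IsNCP t.2.1 t.1) ∧
        x = (l.map fun t => dgen K A t.1 t.2.1 t.2.2).prod}

/-- The set of nonempty bar-words of genuine decorated non-crossing partitions. -/
def DWordPos : Set (TNA K A) :=
  {x | ∃ l : List (PartData × ℕ × (ℕ → A)), l ≠ [] ∧
        (∀ t ∈ l, 1 ≤ t.2.1 ∧ IsNCP t.2.1 t.1) ∧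
        x = (l.map fun t => dgen K A t.1 t.2.1 t.2.2).prod}

/-- `T̄(NC(A))` proper: the span of all words of genuine decorated non-crossing
partitions. -/
def DSpan : Submodule K (TNA K A) := Submodule.span K (DWord K A)

/-- `T(NC(A))`: the augmentation ideal, the span of all nonempty words of genuine
decorated non-crossing partitions. -/
def DIdeal : Submodule K (TNA K A) := Submodule.span K (DWordPos K A)

/-- The augmentation (counit) `e` of `T̄(NC(A))`: `e(1) = 1`, `e = 0` on `T(NC(A))`. -/
def augD : TNA K A →ₐ[K] K := TensorAlgebra.lift K (0 : NCA K A →ₗ[K] K)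

/-- Half-convolution / convolution of linear forms with respect to a (half-)coproduct
`D` on `T̄(NC(A))`: `f ⋆_D g := m_K ∘ (f ⊗ g) ∘ D`. -/
def convD (D : TNA K A →ₗ[K] TNA K A ⊗[K] TNA K A) (f g : TNA K A →ₗ[K] K) :
    TNA K A →ₗ[K] K :=
  LinearMap.mul' K K ∘ₗ TensorProduct.map f g ∘ₗ D

/-- The linear map `x ↦ x ⊗ 1` on `T̄(NC(A))`. -/
def rOneD : TNA K A →ₗ[K] TNA K A ⊗[K] TNA K A :=
  (TensorProduct.mk K (TNA K A) (TNA K A)).flip 1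

/-- The linear map `x ↦ 1 ⊗ x` on `T̄(NC(A))`. -/
def lOneD : TNA K A →ₗ[K] TNA K A ⊗[K] TNA K A :=
  TensorProduct.mk K (TNA K A) (TNA K A) 1

end

noncomputable section

/-- `T(A) = ⊕_{n ≥ 1} A^{⊗n}`, the positive part of the tensor algebra over `A`. -/
abbrev Tpos (K : Type*) [Field K] (A : Type*) [Ring A] [Algebra K A] : Type _ :=
  DirectSum ℕ fun n => PiTensorProduct K fun _ : Fin (n + 1) => A

/-- `T̄(T(A))`: the double tensor algebra over `A`. -/
abbrev TT (K : Type*) [Field K] (A : Type*) [Ring A] [Algebra K A] : Type _ :=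
  TensorAlgebra K (Tpos K A)

variable (K : Type*) [Field K] (A : Type*) [Ring A] [Algebra K A]

/-- The word `a₀ ⋯ a_k` as an element of the module `T(A)`. -/
def tvec (k : ℕ) (a : ℕ → A) : Tpos K A :=
  DirectSum.of (fun n => PiTensorProduct K fun _ : Fin (n + 1) => A) k
    (PiTensorProduct.tprod K fun i : Fin (k + 1) => a (i : ℕ))

/-- The word `a₀ ⋯ a_{m-1}` (of length `m`) as a single bar-letter of `T̄(T(A))`;
the empty word is the unit. -/
def wrd (m : ℕ) (a : ℕ → A) : TT K A :=
  match m with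
  | 0 => 1
  | k + 1 => TensorAlgebra.ι K (tvec K A k a)

/-- The subword `a_S` of the letters indexed by `S`, in increasing order. -/
def sw (a : ℕ → A) (S : Finset ℕ) : TT K A :=
  wrd K A S.card fun j => a ((S.sort (· ≤ ·)).getD j 0)

/-- The value of the coproduct on a word of length `m`:
`Δ(a₀ ⋯ a_{m-1}) = Σ_{S ⊆ [m]} a_S ⊗ (a_{J₁}|⋯|a_{J_k})`, `J₁,…,J_k` the connected
components of `[m] − S`. -/
def wcopF (m : ℕ) (a : ℕ → A) : TT K A ⊗[K] TT K A :=
  ∑ S ∈ (Finset.range m).powerset,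
    sw K A a S ⊗ₜ[K] ((comps S (Finset.range m \ S)).map (sw K A a)).prod

/-- The value of the left half-coproduct `Δ_≺⁺` on a word: the part of the sum with
`S` containing the first position. -/
def wcopP (m : ℕ) (a : ℕ → A) : TT K A ⊗[K] TT K A :=
  ∑ S ∈ (Finset.range m).powerset.filter (fun S => 0 ∈ S),
    sw K A a S ⊗ₜ[K] ((comps S (Finset.range m \ S)).map (sw K A a)).prod

/-- The value of the right half-coproduct `Δ_≻⁺` on a word: the part of the sum with
`S` not containing the first position. -/
def wcopS (m : ℕ) (a : ℕ → A) : TT K A ⊗[K] TT K A :=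
  ∑ S ∈ (Finset.range m).powerset.filter (fun S => 0 ∉ S),
    sw K A a S ⊗ₜ[K] ((comps S (Finset.range m \ S)).map (sw K A a)).prod

/-- The augmentation ideal `T(T(A))` of `T̄(T(A))`. -/
def TIdeal : Submodule K (TT K A) :=
  Submodule.span K {x | ∃ (v : Tpos K A) (y : TT K A), x = TensorAlgebra.ι K v * y}

/-- The augmentation (counit) of `T̄(T(A))`. -/
def augT : TT K A →ₐ[K] K := TensorAlgebra.lift K (0 : Tpos K A →ₗ[K] K)

/-- The linear map `x ↦ x ⊗ 1` on `T̄(T(A))`. -/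
def rOneT : TT K A →ₗ[K] TT K A ⊗[K] TT K A :=
  (TensorProduct.mk K (TT K A) (TT K A)).flip 1

/-- The linear map `x ↦ 1 ⊗ x` on `T̄(T(A))`. -/
def lOneT : TT K A →ₗ[K] TT K A ⊗[K] TT K A :=
  TensorProduct.mk K (TT K A) (TT K A) 1

/-- Half-convolution / convolution of linear forms with respect to a (half-)coproduct `D`:
`f ⋆_D g := m_K ∘ (f ⊗ g) ∘ D`. -/
def convT (D : TT K A →ₗ[K] TT K A ⊗[K] TT K A) (f g : TT K A →ₗ[K] K) :
    TT K A →ₗ[K] K :=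
  LinearMap.mul' K K ∘ₗ TensorProduct.map f g ∘ₗ D

end

noncomputable section

variable (K : Type*) [Field K] (A : Type*) [Ring A] [Algebra K A]

/-- The value of the splitting map on a word:
`Sp(a₁⋯aₙ) = Σ_{L ∈ NC_n} L ⊗ (a₁⋯aₙ)`. -/
def spWord (m : ℕ) (a : ℕ → A) : TNA K A :=
  ∑ P ∈ NCset m, dgen K A P m a

end

/-- The word `a₀ ⋯ a_{m-1}` as an element of the module `T(A)` (zero for `m = 0`). -/
noncomputable def twrd (K : Type*) [Field K] (A : Type*) [Ring A] [Algebra K A]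
    (m : ℕ) (a : ℕ → A) : Tpos K A :=
  match m with
  | 0 => 0
  | k + 1 => tvec K A k a


section AlgAux

open TensorProduct

variable {K : Type*} [Field K] {A : Type*} [Ring A] [Algebra K A]

lemma twrd_congr (m : ℕ) {a b : ℕ → A} (h : ∀ j < m, a j = b j) :
    twrd K A m a = twrd K A m b := by
  cases m with
  | zero => rfl
  | succ k =>
    show tvec K A k a = tvec K A k b
    rw [tvec, tvec]
    congr 1
    exact congrArg _ (funext fun i => h i i.isLt)

lemma dvec_congr (P : PartData) (k : ℕ) {a b : ℕ → A} (h : ∀ j < k + 1, a j = b j) :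
    dvec K A P k a = dvec K A P k b := by
  rw [dvec, dvec]
  congr 1
  exact congrArg _ (funext fun i => h i i.isLt)

lemma dgen_congr (P : PartData) (m : ℕ) {a b : ℕ → A} (h : ∀ j < m, a j = b j) :
    dgen K A P m a = dgen K A P m b := by
  cases m with
  | zero => rfl
  | succ k =>
    show TensorAlgebra.ι K (dvec K A P k a) = TensorAlgebra.ι K (dvec K A P k b)
    rw [dvec_congr P k h]

lemma dgen_zero (P : PartData) (a : ℕ → A) : dgen K A P 0 a = 1 := rfl

lemma dgen_succ (P : PartData) (k : ℕ) (a : ℕ → A) :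
    dgen K A P (k + 1) a = TensorAlgebra.ι K (dvec K A P k a) := rfl

lemma dsub_def (a : ℕ → A) (P' : PartData) (S : Finset ℕ) :
    dsub K A a P' S = dgen K A P' S.card (fun j => a ((S.sort (· ≤ ·)).getD j 0)) := rfl

lemma dsub_empty (a : ℕ → A) (P' : PartData) : dsub K A a P' ∅ = 1 := rfl

lemma dsub_range (n : ℕ) (P : PartData) (a : ℕ → A) :
    dsub K A a P (Finset.range n) = dgen K A P n a := by
  rw [dsub_def, Finset.card_range]
  exact dgen_congr P n (fun j hj => by rw [getD_sort_range hj])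

lemma dgen_mem_DWordPos {P : PartData} {m : ℕ} (a : ℕ → A) (h1 : 1 ≤ m)
    (h2 : IsNCP m P) : dgen K A P m a ∈ DWordPos K A :=
  ⟨[(P, m, a)], List.cons_ne_nil _ _, by simp [h1, h2], by simp⟩

lemma DWordPos_mul {x y : TNA K A} (hx : x ∈ DWordPos K A) (hy : y ∈ DWordPos K A) :
    x * y ∈ DWordPos K A := by
  obtain ⟨l, hl, h1, rfl⟩ := hx
  obtain ⟨l', hl', h1', rfl⟩ := hy
  refine ⟨l ++ l', by simp [hl], ?_, by rw [List.map_append, List.prod_append]⟩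
  intro t ht
  rcases List.mem_append.1 ht with h | h
  · exact h1 t h
  · exact h1' t h

/-- The span of pure tensors whose left factor is a nonempty word. -/
noncomputable def MM (K : Type*) [Field K] (A : Type*) [Ring A] [Algebra K A] :
    Submodule K (TNA K A ⊗[K] TNA K A) :=
  Submodule.span K {z | ∃ p q, p ∈ DWordPos K A ∧ z = p ⊗ₜ[K] q}

lemma MM_gen_mem {p : TNA K A} (q : TNA K A) (hp : p ∈ DWordPos K A) :
    p ⊗ₜ[K] q ∈ MM K A := Submodule.subset_span ⟨p, q, hp, rfl⟩

lemma MM_oneleft_mul (c : TNA K A) {z : TNA K A ⊗[K] TNA K A} (hz : z ∈ MM K A) :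
    ((1 : TNA K A) ⊗ₜ[K] c) * z ∈ MM K A := by
  have hle : MM K A ≤ Submodule.comap
      (LinearMap.mulLeft K ((1 : TNA K A) ⊗ₜ[K] c)) (MM K A) := by
    rw [MM, Submodule.span_le]
    rintro z ⟨p, q, hp, rfl⟩
    simp only [SetLike.mem_coe, Submodule.mem_comap, LinearMap.mulLeft_apply]
    rw [Algebra.TensorProduct.tmul_mul_tmul, one_mul]
    exact MM_gen_mem _ hp
  exact hle hz

lemma MM_genmul {p : TNA K A} (q : TNA K A) (hp : p ∈ DWordPos K A)
    {z : TNA K A ⊗[K] TNA K A} (hz : z ∈ MM K A) : (p ⊗ₜ[K] q) * z ∈ MM K A := by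
  have hle : MM K A ≤ Submodule.comap
      (LinearMap.mulLeft K (p ⊗ₜ[K] q)) (MM K A) := by
    rw [MM, Submodule.span_le]
    rintro z ⟨p', q', hp', rfl⟩
    simp only [SetLike.mem_coe, Submodule.mem_comap, LinearMap.mulLeft_apply]
    rw [Algebra.TensorProduct.tmul_mul_tmul]
    exact MM_gen_mem _ (DWordPos_mul hp hp')
  exact hle hz

lemma MM_mul_oneright (c : TNA K A) {z : TNA K A ⊗[K] TNA K A} (hz : z ∈ MM K A) :
    z * ((1 : TNA K A) ⊗ₜ[K] c) ∈ MM K A := by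
  have hle : MM K A ≤ Submodule.comap
      (LinearMap.mulRight K ((1 : TNA K A) ⊗ₜ[K] c)) (MM K A) := by
    rw [MM, Submodule.span_le]
    rintro z ⟨p, q, hp, rfl⟩
    simp only [SetLike.mem_coe, Submodule.mem_comap, LinearMap.mulRight_apply]
    rw [Algebra.TensorProduct.tmul_mul_tmul, mul_one]
    exact MM_gen_mem _ hp
  exact hle hz

lemma MM_mul {z w : TNA K A ⊗[K] TNA K A} (hz : z ∈ MM K A) (hw : w ∈ MM K A) :
    z * w ∈ MM K A := by
  have hle : MM K A ≤ Submodule.comap (LinearMap.mulRight K w) (MM K A) := by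
    rw [MM, Submodule.span_le]
    rintro z ⟨p, q, hp, rfl⟩
    simp only [SetLike.mem_coe, Submodule.mem_comap, LinearMap.mulRight_apply]
    exact MM_genmul _ hp hw
  exact hle hz

/-- The expansion of `Δ` on a single genuine letter. -/
lemma dcopF_expand (m : ℕ) (P : PartData) (a : ℕ → A) (h : IsNCP (m + 1) P) :
    ∃ E ∈ MM K A, dcopF K A P a = 1 ⊗ₜ[K] dgen K A P (m + 1) a + E := by
  classical
  set fterm : PartData → TNA K A ⊗[K] TNA K A := fun Q =>
    dsub K A a (stdParts Q) (Q.sup id) ⊗ₜ[K]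
      ((comps (Q.sup id) (P.sup id \ Q.sup id)).map fun J =>
        dsub K A a (stdParts ((P \ Q).filter (· ⊆ J))) J).prod with hfterm
  set Fs := P.powerset.filter (fun Q => Adm Q (P \ Q)) with hFs
  have hmem : ∅ ∈ Fs := Finset.mem_filter.2
    ⟨Finset.empty_mem_powerset P, fun q hq => absurd hq (Finset.notMem_empty q)⟩
  have hsplit : dcopF K A P a = fterm ∅ + ∑ Q ∈ Fs.erase ∅, fterm Q := by
    rw [dcopF, ← Finset.add_sum_erase _ fterm hmem]
  have hzero : fterm ∅ = 1 ⊗ₜ[K] dgen K A P (m + 1) a := by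
    rw [hfterm]
    simp only [Finset.sup_empty, Finset.bot_eq_empty, Finset.sdiff_empty]
    rw [dsub_empty, h.2.2.1,
      comps_empty_sep (Finset.nonempty_range_iff.2 (Nat.succ_ne_zero m))]
    have hfilter : (P.filter (· ⊆ Finset.range (m + 1))) = P :=
      Finset.filter_true_of_mem (fun B hB => h.2.2.1 ▸ block_subset_sup hB)
    rw [List.map_cons, List.map_nil, List.prod_cons, List.prod_nil, mul_one,
      hfilter, stdParts_of_range h.2.2.1, dsub_range]
  refine ⟨∑ Q ∈ Fs.erase ∅, fterm Q, ?_, by rw [hsplit, hzero]⟩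
  apply Submodule.sum_mem
  intro Q hQ
  have hQne : Q ≠ ∅ := (Finset.mem_erase.1 hQ).1
  have hQP : Q ⊆ P := Finset.mem_powerset.1
    (Finset.mem_filter.1 (Finset.mem_of_mem_erase hQ)).1
  have hgood : GoodFam Q := (GoodFam.of_isNCP h).subset hQP
  have hsupne : (Q.sup id).Nonempty := by
    obtain ⟨B, hB⟩ := Finset.nonempty_iff_ne_empty.2 hQne
    obtain ⟨x, hx⟩ := Finset.nonempty_iff_ne_empty.2 (fun hc => hgood.ne (hc ▸ hB))
    exact ⟨x, block_subset_sup hB hx⟩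
  rw [hfterm]
  apply MM_gen_mem
  rw [dsub_def]
  exact dgen_mem_DWordPos _ (Finset.card_pos.2 hsupne) (stdParts_isNCP hgood)

/-- Expansion of `Δ` on a word of genuine letters. -/
lemma delta_word (Δ : TNA K A →ₐ[K] TNA K A ⊗[K] TNA K A)
    (hΔ : ∀ (m : ℕ) (P : PartData) (a : ℕ → A), IsNCP m P →
      Δ (dgen K A P m a) = dcopF K A P a)
    (l : List (PartData × ℕ × (ℕ → A)))
    (hl : ∀ t ∈ l, 1 ≤ t.2.1 ∧ IsNCP t.2.1 t.1) :
    ∃ E ∈ MM K A, Δ ((l.map fun t => dgen K A t.1 t.2.1 t.2.2).prod)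
      = 1 ⊗ₜ[K] (l.map fun t => dgen K A t.1 t.2.1 t.2.2).prod + E := by
  induction l with
  | nil => exact ⟨0, zero_mem _, by simp [Algebra.TensorProduct.one_def]⟩
  | cons t rest ih =>
    obtain ⟨P, m, a⟩ := t
    obtain ⟨h1, h2⟩ := hl _ (List.mem_cons_self)
    simp only at h1 h2
    obtain ⟨E', hE', hEq'⟩ := ih (fun u hu => hl u (List.mem_cons_of_mem _ hu))
    obtain ⟨m', rfl⟩ := Nat.exists_eq_succ_of_ne_zero (by omega : m ≠ 0)
    obtain ⟨E₀, hE₀, hEq₀⟩ := dcopF_expand (K := K) (A := A) m' P a h2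
    set g := dgen K A P (m' + 1) a with hg
    set y := (rest.map fun t => dgen K A t.1 t.2.1 t.2.2).prod with hy
    rw [List.map_cons, List.prod_cons, map_mul, hΔ _ _ _ h2]
    rw [hEq₀, hEq', add_mul, mul_add, mul_add]
    rw [Algebra.TensorProduct.tmul_mul_tmul, one_mul]
    refine ⟨1 ⊗ₜ[K] g * E' + (E₀ * (1 ⊗ₜ[K] y) + E₀ * E'), ?_, by abel⟩
    exact add_mem (MM_oneleft_mul g hE')
      (add_mem (MM_mul_oneright y hE₀) (MM_mul hE₀ hE'))

/-- Per-component block values match the unstandardized ones. -/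
lemma block_value_comp (f : Tpos K A → K) (a : ℕ → A) {R : PartData} {J : Finset ℕ}
    (hR : GoodFam R) (hg : R.sup id = J) :
    ∏ B' ∈ stdParts R, f (twrd K A B'.card fun j =>
        a ((J.sort (· ≤ ·)).getD ((B'.sort (· ≤ ·)).getD j 0) 0))
    = ∏ B ∈ R, f (twrd K A B.card fun j => a ((B.sort (· ≤ ·)).getD j 0)) := by
  subst hg
  set J := R.sup id with hJ
  rw [stdParts, ← hJ]
  rw [Finset.prod_image (fun B hB B' hB' he => image_rk_injOn hR hB hB' (hJ ▸ he))]
  apply Finset.prod_congr rfl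
  intro B hB
  have hBJ : B ⊆ J := block_subset_sup hB
  have hcard : (B.image (rk J)).card = B.card :=
    Finset.card_image_of_injOn (fun x hx y hy => rk_injOn (hBJ hx) (hBJ hy))
  rw [hcard]
  congr 1
  apply twrd_congr
  intro j hj
  rw [sort_image_getD hBJ hj, getD_sort_rk (hBJ (getD_sort_mem hj))]

end AlgAux

set_option maxHeartbeats 2000000 in
/-- Let `κ` be a linear form on `T(A)`, `sd(κ)` its standard section on
`NC(A)` (equal to `κ(a₁⋯aₙ)` on the one-block partition decorated by `a₁⋯aₙ` and `0` on
all other non-crossing partitions), extended to an infinitesimal character on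
`T̄(NC(A))`, and let `Ψ` be the solution of `Ψ = e + sd(κ) ≺ Ψ`.  Then for every
non-crossing partition `L = {L₁,…,L_k}` of `[n]` and all decorations:
`Ψ(L ⊗ (a₁⋯aₙ)) = Π_i κ(a_{L_i})`, and consequently
`Ψ(Sp(a₁⋯aₙ)) = Σ_{L ∈ NC_n} κ^L(a₁⋯aₙ)`. -/
theorem standard_section_solution_computes_multiplicative_extension
    (K : Type*) [Field K] [CharZero K] (A : Type*) [Ring A] [Algebra K A]
    (Δ : TNA K A →ₐ[K] TNA K A ⊗[K] TNA K A)
    (hΔ : ∀ (m : ℕ) (P : PartData) (a : ℕ → A), IsNCP m P →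
      Δ (dgen K A P m a) = dcopF K A P a)
    (Δp : TNA K A →ₗ[K] TNA K A ⊗[K] TNA K A)
    (hpgen : ∀ (m : ℕ) (P : PartData) (a : ℕ → A), IsNCP m P →
      Δp (dgen K A P m a) = dcopP K A P a)
    (hpext : ∀ (v : NCA K A) (y : TNA K A),
      Δp (TensorAlgebra.ι K v * y) = Δp (TensorAlgebra.ι K v) * Δ y)
    -- κ, a linear form on T(A)
    (κ : Tpos K A →ₗ[K] K)
    -- the standard section sd(κ) on NC(A)
    (s : NCA K A →ₗ[K] K)
    (hsd : ∀ (k : ℕ) (P : PartData) (a : ℕ → A), IsNCP (k + 1) P →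
      s (dvec K A P k a)
        = if P = {Finset.range (k + 1)} then κ (twrd K A (k + 1) a) else 0)
    -- sd(κ) extended as an infinitesimal character to T̄(NC(A))
    (F : TNA K A →ₗ[K] K)
    (hF1 : F 1 = 0)
    (hFgen : ∀ v : NCA K A, F (TensorAlgebra.ι K v) = s v)
    (hFprod : ∀ (v : NCA K A), ∀ y ∈ DIdeal K A, F (TensorAlgebra.ι K v * y) = 0)
    -- Ψ, the solution of Ψ = e + sd(κ) ≺ Ψ
    (Ψ : TNA K A →ₗ[K] K)
    (hΨ1 : Ψ 1 = 1)
    (hΨfix : ∀ x ∈ DIdeal K A, Ψ x = convD K A Δp F Ψ x) :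
    -- Ψ(L ⊗ (a₁⋯aₙ)) = Π_{blocks} κ(a_{L_i})
    (∀ (m : ℕ) (P : PartData) (a : ℕ → A), IsNCP (m + 1) P →
      Ψ (dgen K A P (m + 1) a)
        = ∏ B ∈ P, κ (twrd K A B.card fun j => a ((B.sort (· ≤ ·)).getD j 0))) ∧
    -- Ψ(Sp(a₁⋯aₙ)) = Σ_{L ∈ NC_n} κ^L(a₁⋯aₙ) ( = φ(a₁⋯aₙ) )
    (∀ (m : ℕ) (a : ℕ → A),
      Ψ (spWord K A (m + 1) a)
        = ∑ P ∈ NCset (m + 1),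
            ∏ B ∈ P, κ (twrd K A B.card fun j => a ((B.sort (· ≤ ·)).getD j 0))) := by
  classical
  set c : TNA K A ⊗[K] TNA K A →ₗ[K] K :=
    LinearMap.mul' K K ∘ₗ TensorProduct.map F Ψ with hc
  have hc_tmul : ∀ (x y : TNA K A), c (x ⊗ₜ[K] y) = F x * Ψ y := by
    intro x y
    simp [hc, TensorProduct.map_tmul, LinearMap.mul'_apply]
  have hΨc : ∀ x ∈ DIdeal K A, Ψ x = c (Δp x) := by
    intro x hx
    rw [hΨfix x hx]; rfl
  have hkill : ∀ (v : NCA K A) (w : TNA K A), ∀ z ∈ MM K A,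
      c ((TensorAlgebra.ι K v ⊗ₜ[K] w) * z) = 0 := by
    intro v w
    have hle : MM K A ≤ LinearMap.ker
        (c ∘ₗ LinearMap.mulLeft K (TensorAlgebra.ι K v ⊗ₜ[K] w)) := by
      rw [MM, Submodule.span_le]
      rintro z ⟨p, q, hp, rfl⟩
      simp only [SetLike.mem_coe, LinearMap.mem_ker, LinearMap.comp_apply,
        LinearMap.mulLeft_apply]
      rw [Algebra.TensorProduct.tmul_mul_tmul, hc_tmul,
        hFprod v _ (Submodule.subset_span hp), zero_mul]
    intro z hz
    exact hle hz
  -- the main induction on the total decoration length of a word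
  have main : ∀ N : ℕ, ∀ l : List (PartData × ℕ × (ℕ → A)),
      (l.map fun t => t.2.1).sum ≤ N →
      (∀ t ∈ l, 1 ≤ t.2.1 ∧ IsNCP t.2.1 t.1) →
      Ψ ((l.map fun t => dgen K A t.1 t.2.1 t.2.2).prod)
        = (l.map fun t => ∏ B ∈ t.1,
            κ (twrd K A B.card fun j => t.2.2 ((B.sort (· ≤ ·)).getD j 0))).prod := by
    intro N
    induction N with
    | zero =>
      intro l hsum hl
      cases l with
      | nil => simpa using hΨ1
      | cons t rest =>
        exfalso
        have := (hl t (List.mem_cons_self)).1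
        simp only [List.map_cons, List.sum_cons] at hsum
        omega
    | succ N ihN =>
      intro l hsum hl
      cases l with
      | nil => simpa using hΨ1
      | cons t rest =>
        obtain ⟨P, m, a⟩ := t
        obtain ⟨h1, hP⟩ := hl _ (List.mem_cons_self)
        simp only at h1 hP
        obtain ⟨m', rfl⟩ := Nat.exists_eq_succ_of_ne_zero (by omega : m ≠ 0)
        simp only [List.map_cons, List.sum_cons] at hsum
        set y := (rest.map fun t => dgen K A t.1 t.2.1 t.2.2).prod with hy
        have hrest : ∀ u ∈ rest, 1 ≤ u.2.1 ∧ IsNCP u.2.1 u.1 :=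
          fun u hu => hl u (List.mem_cons_of_mem _ hu)
        -- the block containing 0
        have h0sup : (0 : ℕ) ∈ P.sup id := by
          rw [hP.2.2.1]; exact Finset.mem_range.2 (Nat.succ_pos m')
        obtain ⟨B₀, hB₀P, h0⟩ := Finset.mem_sup.1 h0sup
        rw [id_eq] at h0
        obtain ⟨k, hk⟩ : ∃ k, B₀.card = k + 1 :=
          ⟨B₀.card - 1, by have := Finset.card_pos.2 ⟨0, h0⟩; omega⟩
        have hword : dgen K A P (m' + 1) a * y =
            (((P, m' + 1, a) :: rest).map fun t => dgen K A t.1 t.2.1 t.2.2).prod := by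
          rw [List.map_cons, List.prod_cons]
        have hxI : dgen K A P (m' + 1) a * y ∈ DIdeal K A :=
          Submodule.subset_span ⟨(P, m' + 1, a) :: rest, List.cons_ne_nil _ _, hl, hword⟩
        obtain ⟨E, hE, hEq⟩ := delta_word Δ hΔ rest hrest
        rw [← hy] at hEq
        rw [List.map_cons, List.prod_cons, ← hy, hΨc _ hxI, dgen_succ, hpext,
          ← dgen_succ, hpgen _ _ _ hP, hEq, dcopP, mul_add, map_add,
          Finset.sum_mul, Finset.sum_mul, map_sum, map_sum]
        -- kill the E-part
        have h2nd : ∀ Q : PartData, (∃ q ∈ Q, 0 ∈ q) →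
            ∀ w : TNA K A,
            c ((dsub K A a (stdParts Q) (Q.sup id) ⊗ₜ[K] w) * E) = 0 := by
          intro Q hQ w
          obtain ⟨q, hq, hq0⟩ := hQ
          obtain ⟨k', hk'⟩ : ∃ k', (Q.sup id).card = k' + 1 :=
            ⟨(Q.sup id).card - 1, by
              have := Finset.card_pos.2 ⟨0, block_subset_sup hq hq0⟩; omega⟩
          rw [dsub_def, hk', dgen_succ]
          exact hkill _ _ E hE
        rw [Finset.sum_eq_zero (fun Q hQ =>
          h2nd Q (Finset.mem_filter.1 hQ).2.2 _), add_zero]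
        -- isolate Q = {B₀}
        have hB₀Fs : ({B₀} : PartData) ∈ P.powerset.filter
            (fun Q => Adm Q (P \ Q) ∧ ∃ q ∈ Q, 0 ∈ q) :=
          Finset.mem_filter.2 ⟨Finset.mem_powerset.2 (Finset.singleton_subset_iff.2 hB₀P),
            adm_zero_block h0 _, ⟨B₀, Finset.mem_singleton_self _, h0⟩⟩
        have hothers : ∀ Q ∈ P.powerset.filter
            (fun Q => Adm Q (P \ Q) ∧ ∃ q ∈ Q, 0 ∈ q), Q ≠ ({B₀} : PartData) →
            ∀ w : TNA K A,
            c ((dsub K A a (stdParts Q) (Q.sup id) ⊗ₜ[K] w) * (1 ⊗ₜ[K] y)) = 0 := by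
          intro Q hQ hne w
          obtain ⟨hpow, -, q, hq, hq0⟩ := Finset.mem_filter.1 hQ
          have hQP : Q ⊆ P := Finset.mem_powerset.1 hpow
          have hqB₀ : q = B₀ := zero_block_unique hP hB₀P h0 (hQP hq) hq0
          subst hqB₀
          have hgood : GoodFam Q := (GoodFam.of_isNCP hP).subset hQP
          have h2 : 1 < Q.card := by
            by_contra hcard
            apply hne
            have h1c : Q.card = 1 :=
              le_antisymm (not_lt.1 hcard) (Finset.card_pos.2 ⟨q, hq⟩)
            obtain ⟨B, hB⟩ := Finset.card_eq_one.1 h1c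
            rw [hB] at hq ⊢
            rw [Finset.mem_singleton.1 hq]
          obtain ⟨k', hk'⟩ : ∃ k', (Q.sup id).card = k' + 1 :=
            ⟨(Q.sup id).card - 1, by
              have := Finset.card_pos.2 ⟨0, block_subset_sup hq hq0⟩; omega⟩
          have hncp : IsNCP (k' + 1) (stdParts Q) := hk' ▸ stdParts_isNCP hgood
          have hnotone : stdParts Q ≠ {Finset.range (k' + 1)} := by
            intro hcmp
            have h1' : (stdParts Q).card = Q.card := card_stdParts hgood
            rw [hcmp, Finset.card_singleton] at h1'
            omega
          rw [dsub_def, hk', dgen_succ, Algebra.TensorProduct.tmul_mul_tmul,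
            mul_one, hc_tmul, hFgen, hsd _ _ _ hncp, if_neg hnotone, zero_mul]
        rw [Finset.sum_eq_single_of_mem _ hB₀Fs (fun Q hQ hne => hothers Q hQ hne _)]
        -- compute the main term
        have hsupB : ({B₀} : PartData).sup id = B₀ := Finset.sup_singleton
        rw [Algebra.TensorProduct.tmul_mul_tmul, mul_one, hc_tmul, hsupB,
          stdParts_singleton, hP.2.2.1]
        -- the F-factor
        have hFfac : F (dsub K A a {Finset.range B₀.card} B₀)
            = κ (twrd K A B₀.card fun j => a ((B₀.sort (· ≤ ·)).getD j 0)) := by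
          rw [dsub_def, hk, dgen_succ, hFgen, hsd _ _ _ (isNCP_single k), if_pos rfl]
        rw [hFfac]
        -- the Ψ-factor via the induction hypothesis
        have hTsub : B₀ ⊆ Finset.range (m' + 1) := hP.2.2.1 ▸ block_subset_sup hB₀P
        set T := Finset.range (m' + 1) \ B₀ with hT
        set l₁ : List (PartData × ℕ × (ℕ → A)) := (comps B₀ T).map
          (fun J => (stdParts ((P.erase B₀).filter (· ⊆ J)), J.card,
            fun j => a ((J.sort (· ≤ ·)).getD j 0))) with hl₁
        have hsdiff : P \ ({B₀} : PartData) = P.erase B₀ := (Finset.erase_eq _ _).symm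
        have hwform : ((comps B₀ T).map fun J =>
            dsub K A a (stdParts ((P \ ({B₀} : PartData)).filter (· ⊆ J))) J).prod
            = (l₁.map fun t => dgen K A t.1 t.2.1 t.2.2).prod := by
          rw [hsdiff, hl₁, List.map_map]
          rfl
        have hl₁good : ∀ t ∈ l₁ ++ rest, 1 ≤ t.2.1 ∧ IsNCP t.2.1 t.1 := by
          intro t ht
          rcases List.mem_append.1 ht with ht | ht
          · rw [hl₁] at ht
            obtain ⟨J, hJ, rfl⟩ := List.mem_map.1 ht
            refine ⟨Finset.card_pos.2 (comps_nonempty hJ), ?_⟩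
            have hsub : (P.erase B₀).filter (· ⊆ J) ⊆ P :=
              fun B hB => Finset.mem_of_mem_erase (Finset.mem_filter.1 hB).1
            have := stdParts_isNCP ((GoodFam.of_isNCP hP).subset hsub)
            rwa [comp_ground hP hB₀P h0 hJ] at this
          · exact hrest t ht
        have hl₁sum : (l₁.map fun t => t.2.1).sum = T.card := by
          rw [hl₁, List.map_map]
          exact comps_card_sum hST_aux
        have hsum' : ((l₁ ++ rest).map fun t => t.2.1).sum ≤ N := by
          rw [List.map_append, List.sum_append, hl₁sum, hT,
            Finset.card_sdiff_of_subset hTsub, Finset.card_range]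
          omega
        have hih := ihN (l₁ ++ rest) hsum' hl₁good
        rw [List.map_append, List.prod_append, ← hy] at hih
        rw [hwform, hih]
        -- evaluate the value of the component letters
        have hval₁ : (l₁.map fun t => ∏ B ∈ t.1,
            κ (twrd K A B.card fun j => t.2.2 ((B.sort (· ≤ ·)).getD j 0))).prod
            = ∏ B ∈ P.erase B₀,
              κ (twrd K A B.card fun j => a ((B.sort (· ≤ ·)).getD j 0)) := by
          rw [hl₁, List.map_map]
          rw [← prod_comps_blocks hP hB₀P h0
            (fun B => κ (twrd K A B.card fun j => a ((B.sort (· ≤ ·)).getD j 0)))]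
          rw [← hT]
          congr 1
          apply List.map_congr_left
          intro J hJ
          simp only [Function.comp_apply]
          have hsub : (P.erase B₀).filter (· ⊆ J) ⊆ P :=
            fun B hB => Finset.mem_of_mem_erase (Finset.mem_filter.1 hB).1
          exact block_value_comp κ a ((GoodFam.of_isNCP hP).subset hsub)
            (comp_ground hP hB₀P h0 hJ)
        rw [List.map_append, List.prod_append, hval₁, ← mul_assoc,
          Finset.mul_prod_erase P
            (fun B => κ (twrd K A B.card fun j => a ((B.sort (· ≤ ·)).getD j 0))) hB₀P,
          List.map_cons, List.prod_cons]
  refine ⟨?_, ?_⟩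
  · intro m P a hP
    have h := main (m + 1) [(P, m + 1, a)] (by simp) (by simp [hP])
    simpa using h
  · intro m a
    rw [spWord, map_sum]
    apply Finset.sum_congr rfl
    intro P hPmem
    have hP : IsNCP (m + 1) P := (Finset.mem_filter.1 hPmem).2
    have h := main (m + 1) [(P, m + 1, a)] (by simp) (by simp [hP])
    simpa using h
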